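/- For every integer r large enough, the integral ∫_{r(1+ε_r)}^{∞} e^{-x} x^r / r! dx is at most r^{-0.3 log r}, where ε_r = r^{-1/2} log r. -/

import Mathlib

open MeasureTheory Filter Real Topology

lemma aux_one_add_mul_exp_neg {ε : ℝ} (h0 : 0 ≤ ε) (h3 : ε ≤ 1/3) :
    (1 + ε) * Real.exp (-ε) ≤ 1 - ε^2/3 := by
  have hq := Real.quadratic_le_exp_of_nonneg h0
  have he : Real.exp (-ε) * Real.exp ε = 1 := by rw [← Real.exp_add]; simp
  have hep : (0:ℝ) < Real.exp (-ε) := Real.exp_pos _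
  have h13 : (0:ℝ) ≤ 1 - ε^2/3 := by nlinarith
  have hcube : ε^3 ≤ ε^2/3 := by nlinarith [mul_le_mul_of_nonneg_left h3 (sq_nonneg ε)]
  have hsq9 : ε^2 ≤ 1/9 := by nlinarith
  have hquart : ε^4 ≤ ε^2/9 := by nlinarith [mul_le_mul_of_nonneg_left hsq9 (sq_nonneg ε)]
  have key : 1 + ε ≤ (1 - ε^2/3) * Real.exp ε := by
    nlinarith [mul_le_mul_of_nonneg_left hq h13, hcube, hquart, sq_nonneg ε]
  calc (1 + ε) * Real.exp (-ε) ≤ ((1 - ε^2/3) * Real.exp ε) * Real.exp (-ε) :=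
        mul_le_mul_of_nonneg_right key hep.le
    _ = 1 - ε^2/3 := by rw [mul_assoc, mul_comm (Real.exp ε), he, mul_one]

lemma aux_integral_exp_neg_mul (a : ℝ) {c : ℝ} (hc : 0 < c) :
    ∫ x in Set.Ioi a, Real.exp (-c * x) = Real.exp (-c * a) / c := by
  have hderiv : ∀ x ∈ Set.Ici a, HasDerivAt (fun y => -Real.exp (-c * y) / c)
      (Real.exp (-c * x)) x := by
    intro x _
    have h1 : HasDerivAt (fun y : ℝ => -c * y) (-c * 1) x := (hasDerivAt_id x).const_mul (-c)
    have h2 := (h1.exp.div_const c).neg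
    refine (h1.exp.neg.div_const c).congr_deriv ?_
    rw [mul_one, mul_neg, neg_neg, mul_div_assoc, div_self hc.ne', mul_one]
  have htend : Tendsto (fun y => -Real.exp (-c * y) / c) atTop (𝓝 0) := by
    have h : Tendsto (fun y : ℝ => -c * y) atTop atBot :=
      tendsto_id.const_mul_atTop_of_neg (neg_neg_iff_pos.mpr hc)
    have := ((Real.tendsto_exp_atBot.comp h).neg).div_const c
    simpa using this
  have := integral_Ioi_of_hasDerivAt_of_tendsto' hderiv (exp_neg_integrableOn_Ioi a hc) htend
  rw [this]
  ring

set_option maxHeartbeats 1000000 in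
/-- Upper-tail estimate for the incomplete Gamma integral:
`∫_{r(1+ε_r)}^∞ e^{-x} x^r / r! dx ≤ r^{-0.3 log r}` for all large `r`,
where `ε_r = r^{-1/2} log r`. -/
theorem gamma_upper_tail :
    ∀ᶠ r : ℕ in atTop,
      (∫ x in Set.Ioi ((r : ℝ) * (1 + (r : ℝ) ^ (-(1 : ℝ) / 2) * Real.log r)),
          Real.exp (-x) * x ^ r / (Nat.factorial r))
        ≤ (r : ℝ) ^ (-(0.3) * Real.log r) := by
  have hcast : Tendsto (fun n : ℕ => (n : ℝ)) atTop atTop := tendsto_natCast_atTop_atTop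
  filter_upwards [hcast.eventually (tendsto_log_atTop.eventually_ge_atTop 30),
    hcast.eventually ((isLittleO_log_rpow_atTop (by norm_num : (0:ℝ) < 1/2)).def
      (by norm_num : (0:ℝ) < 1/3)),
    eventually_ge_atTop 1] with r hL hsmall hr1
  set R : ℝ := (r : ℝ) with hRdef
  have hR1 : (1:ℝ) ≤ R := by rw [hRdef]; exact_mod_cast hr1
  have hR0 : (0:ℝ) < R := lt_of_lt_of_le one_pos hR1
  set L : ℝ := Real.log R with hLdef
  have hL0 : (0:ℝ) < L := lt_of_lt_of_le (by norm_num) hL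
  set s : ℝ := R ^ ((1:ℝ)/2) with hsdef
  have hs0 : (0:ℝ) < s := Real.rpow_pos_of_pos hR0 _
  have hs1 : (1:ℝ) ≤ s := Real.one_le_rpow hR1 (by norm_num)
  have hss : s * s = R := by
    rw [hsdef, ← Real.rpow_add hR0]; norm_num
  set ε : ℝ := R ^ (-(1:ℝ)/2) * L with hεdef
  have hεs : ε = L / s := by
    rw [hεdef, show (-(1:ℝ)/2) = -((1:ℝ)/2) by ring, Real.rpow_neg hR0.le, ← hsdef]
    ring
  have hε0 : 0 < ε := by
    rw [hεs]; positivity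
  have hε3 : ε ≤ 1/3 := by
    rw [hεs, div_le_iff₀ hs0]
    have h1 : |L| ≤ 1/3 * |s| := by
      simpa [hLdef, hsdef, Real.norm_eq_abs] using hsmall
    calc L ≤ |L| := le_abs_self _
      _ ≤ 1/3 * |s| := h1
      _ = 1/3 * s := by rw [abs_of_pos hs0]
  have h1ε : (0:ℝ) < 1 + ε := by linarith
  set a : ℝ := R * (1 + ε) with hadef
  have ha0 : 0 < a := by positivity
  set c : ℝ := ε / (1 + ε) with hcdef
  have hc0 : 0 < c := div_pos hε0 h1ε
  have hca : c * a = R * ε := by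
    rw [hcdef, hadef]; field_simp
  set F : ℝ := (Nat.factorial r : ℝ) with hFdef
  have hF0 : (0:ℝ) < F := by
    rw [hFdef]; exact_mod_cast Nat.factorial_pos r
  set K : ℝ := a ^ r * Real.exp (-R) / F with hKdef
  -- pointwise bound
  have hpt : ∀ x ∈ Set.Ioi a, Real.exp (-x) * x ^ r / F ≤ K * Real.exp (-c * x) := by
    intro x hx
    have hxa : a < x := hx
    have hx0 : 0 < x := lt_trans ha0 hxa
    have hlog : Real.log x ≤ Real.log a + (x - a) / a := by
      have h := Real.log_le_sub_one_of_pos (div_pos hx0 ha0)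
      rw [Real.log_div hx0.ne' ha0.ne'] at h
      have : x / a - 1 = (x - a) / a := by field_simp
      linarith [this ▸ h]
    have hxr : x ^ r = Real.exp ((r:ℝ) * Real.log x) := by
      rw [Real.exp_nat_mul, Real.exp_log hx0]
    have har : a ^ r = Real.exp ((r:ℝ) * Real.log a) := by
      rw [Real.exp_nat_mul, Real.exp_log ha0]
    have hkey : -x + (r:ℝ) * (Real.log a + (x - a)/a) = (r:ℝ) * Real.log a + -R + -c * x := by
      have hc' : c = 1 - R / a := by
        rw [hcdef, hadef]; field_simp; ring
      rw [hc', hadef]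
      field_simp
      ring
    have hexp : Real.exp (-x) * x ^ r ≤ a ^ r * Real.exp (-R) * Real.exp (-c * x) := by
      rw [hxr, har, ← Real.exp_add, ← Real.exp_add, ← Real.exp_add]
      apply Real.exp_le_exp.mpr
      calc -x + (r:ℝ) * Real.log x ≤ -x + (r:ℝ) * (Real.log a + (x - a)/a) := by
            have : (0:ℝ) ≤ (r:ℝ) := Nat.cast_nonneg r
            nlinarith
        _ = (r:ℝ) * Real.log a + -R + -c * x := hkey
    rw [hKdef, div_mul_eq_mul_div, div_le_div_iff_of_pos_right hF0]
    exact hexp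
  -- integral bound
  have hInt : IntegrableOn (fun x => K * Real.exp (-c * x)) (Set.Ioi a) :=
    (exp_neg_integrableOn_Ioi a hc0).const_mul K
  have hmono : (∫ x in Set.Ioi a, Real.exp (-x) * x ^ r / F)
      ≤ ∫ x in Set.Ioi a, K * Real.exp (-c * x) := by
    apply integral_mono_of_nonneg
    · rw [EventuallyLE, ae_restrict_iff' measurableSet_Ioi]
      filter_upwards with x hx
      have hx0 : (0:ℝ) < x := lt_trans ha0 hx
      exact div_nonneg (mul_nonneg (Real.exp_pos _).le (pow_nonneg hx0.le r)) hF0.le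
    · exact hInt
    · rw [EventuallyLE, ae_restrict_iff' measurableSet_Ioi]
      filter_upwards with x hx
      exact hpt x hx
  have hIval : (∫ x in Set.Ioi a, K * Real.exp (-c * x)) = K * (Real.exp (-(R * ε)) / c) := by
    rw [integral_const_mul, aux_integral_exp_neg_mul a hc0, neg_mul, hca]
  -- now arithmetic
  have hfact : R ^ r ≤ F * Real.exp R := by
    have := Real.pow_div_factorial_le_exp R hR0.le r
    rw [div_le_iff₀ hF0] at this
    linarith [this]
  have hone : (1 + ε) / ε ≤ R := by
    rw [div_le_iff₀ hε0]
    have hRε : R * ε = s * L := by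
      rw [hεs, ← hss]; field_simp
    have : (1:ℝ) + ε ≤ s * L := by
      have h30 : (30:ℝ) ≤ s * L := by nlinarith
      linarith
    linarith [this, hRε ▸ this]
  have hKle : K * (Real.exp (-(R * ε)) / c) ≤ ((1 + ε) * Real.exp (-ε)) ^ r * R := by
    have heq : K * (Real.exp (-(R * ε)) / c)
        = (R ^ r * Real.exp (-R) / F) * (((1 + ε) * Real.exp (-ε)) ^ r * ((1 + ε) / ε)) := by
      rw [hKdef, hcdef, hadef]
      rw [mul_pow, mul_pow, ← Real.exp_nat_mul,
        show (r:ℝ) * (-ε) = -(R * ε) by rw [hRdef]; ring, Real.exp_neg (R * ε)]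
      field_simp
    rw [heq]
    have h1 : R ^ r * Real.exp (-R) / F ≤ 1 := by
      rw [div_le_one hF0, Real.exp_neg]
      rw [← div_le_iff₀ (Real.exp_pos R)] at hfact
      calc R ^ r * (Real.exp R)⁻¹ = R ^ r / Real.exp R := by ring
        _ ≤ F := hfact
    have hpow0 : (0:ℝ) ≤ ((1 + ε) * Real.exp (-ε)) ^ r := by positivity
    calc (R ^ r * Real.exp (-R) / F) * (((1 + ε) * Real.exp (-ε)) ^ r * ((1 + ε) / ε))
        ≤ 1 * (((1 + ε) * Real.exp (-ε)) ^ r * ((1 + ε) / ε)) := by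
          apply mul_le_mul_of_nonneg_right h1
          positivity
      _ = ((1 + ε) * Real.exp (-ε)) ^ r * ((1 + ε) / ε) := by ring
      _ ≤ ((1 + ε) * Real.exp (-ε)) ^ r * R :=
          mul_le_mul_of_nonneg_left hone hpow0
  have hmid : ((1 + ε) * Real.exp (-ε)) ^ r * R ≤ Real.exp (-(L^2/3)) * R := by
    apply mul_le_mul_of_nonneg_right _ hR0.le
    have hstep1 : ((1 + ε) * Real.exp (-ε)) ^ r ≤ (Real.exp (-(ε^2/3))) ^ r := by
      apply pow_le_pow_left₀ (by positivity)
      calc (1 + ε) * Real.exp (-ε) ≤ 1 - ε^2/3 := aux_one_add_mul_exp_neg hε0.le hε3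
        _ ≤ Real.exp (-(ε^2/3)) := by
            have := Real.add_one_le_exp (-(ε^2/3))
            linarith
    have hstep2 : (Real.exp (-(ε^2/3))) ^ r = Real.exp (-(R * ε^2/3)) := by
      rw [← Real.exp_nat_mul]
      congr 1
      rw [hRdef]; ring
    have hRε2 : R * ε^2 = L^2 := by
      rw [hεs, div_pow, ← hss]
      field_simp
    calc ((1 + ε) * Real.exp (-ε)) ^ r ≤ (Real.exp (-(ε^2/3))) ^ r := hstep1
      _ = Real.exp (-(R * ε^2/3)) := hstep2
      _ = Real.exp (-(L^2/3)) := by rw [show R * ε^2/3 = (R * ε^2)/3 by ring, hRε2]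
  have hfinal : Real.exp (-(L^2/3)) * R ≤ R ^ (-(0.3) * L) := by
    rw [Real.rpow_def_of_pos hR0, ← hLdef]
    have hRL : R = Real.exp L := by rw [hLdef, Real.exp_log hR0]
    rw [hRL, ← Real.exp_add]
    apply Real.exp_le_exp.mpr
    nlinarith
  calc (∫ x in Set.Ioi a, Real.exp (-x) * x ^ r / F)
      ≤ ∫ x in Set.Ioi a, K * Real.exp (-c * x) := hmono
    _ = K * (Real.exp (-(R * ε)) / c) := hIval
    _ ≤ ((1 + ε) * Real.exp (-ε)) ^ r * R := hKle
    _ ≤ Real.exp (-(L^2/3)) * R := hmid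
    _ ≤ R ^ (-(0.3) * L) := hfinal
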